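/- Let Φ₁, Φ₂ : ℝ² × ℝ → ℂ be continuously differentiable, K-quasiperiodic, with Φ₁, Φ₂ and their in-plane gradients square-integrable on Ω × ℝ, and suppose there exists s ∈ {+1, −1} such that Φ₂(x₁, x₂, z) = s · Φ₁(x₁, −x₂, −z) for all (x₁, x₂, z). Then the complex number v := ∫_{Ω×ℝ} conj(Φ₁(x,z)) · (−i ∂_{x₁}Φ₂)(x,z) dx dz is real: v = conj(v). -/

import Mathlib

noncomputable section

open MeasureTheory Real Complex

abbrev Pt : Type := ℝ × ℝ

/-- Euclidean dot product on ℝ². -/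
def dot (v w : Pt) : ℝ := v.1 * w.1 + v.2 * w.2

/-- The matrix J acting by J(x₁,x₂) = (x₂, −x₁). -/
def Jmat (v : Pt) : Pt := (v.2, -v.1)

/-- Rotation of ℝ² by angle θ. -/
def rotA (θ : ℝ) (v : Pt) : Pt :=
  (Real.cos θ * v.1 - Real.sin θ * v.2, Real.sin θ * v.1 + Real.cos θ * v.2)

/-- Lattice vector a₁ = a₀(1/2, −√3/2). -/
def av1 (a0 : ℝ) : Pt := (a0 / 2, -(Real.sqrt 3 * a0 / 2))

/-- Lattice vector a₂ = a₀(1/2, √3/2). -/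
def av2 (a0 : ℝ) : Pt := (a0 / 2, Real.sqrt 3 * a0 / 2)

/-- The graphene lattice 𝕃 = ℤa₁ + ℤa₂. -/
def lat (a0 : ℝ) : AddSubgroup Pt := AddSubgroup.closure {av1 a0, av2 a0}

/-- The moiré lattice 𝕃_M = J𝕃. -/
def latM (a0 : ℝ) : AddSubgroup Pt := AddSubgroup.closure {Jmat (av1 a0), Jmat (av2 a0)}

/-- Dual basis vector a₁*. -/
def as1 (a0 : ℝ) : Pt := (2 * π / a0, -(2 * π / (Real.sqrt 3 * a0)))

/-- Dual basis vector a₂*. -/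
def as2 (a0 : ℝ) : Pt := (2 * π / a0, 2 * π / (Real.sqrt 3 * a0))

/-- The Dirac point K = (a₁* + a₂*)/3. -/
def Kpt (a0 : ℝ) : Pt := (3 : ℝ)⁻¹ • (as1 a0 + as2 a0)

/-- A dual lattice vector G = m₁a₁* + m₂a₂*. -/
def dualVec (a0 : ℝ) (m : ℤ × ℤ) : Pt := (m.1 : ℝ) • as1 a0 + (m.2 : ℝ) • as2 a0

/-- 𝕃-periodicity in the first variable. -/
def LPeriodic (a0 : ℝ) (f : Pt → ℝ → ℂ) : Prop :=
  ∀ R ∈ lat a0, ∀ (x : Pt) (z : ℝ), f (x + R) z = f x z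

/-- K-quasiperiodicity in the first variable. -/
def KQuasiperiodic (a0 : ℝ) (Φ : Pt → ℝ → ℂ) : Prop :=
  ∀ R ∈ lat a0, ∀ (x : Pt) (z : ℝ),
    Φ (x + R) z = Complex.exp (Complex.I * (dot (Kpt a0) R : ℂ)) * Φ x z

/-- ω = e^{2πi/3}. -/
def ωc : ℂ := Complex.exp (2 * Real.pi * Complex.I / 3)

/-- The integrand of ((f,g))_d^{ηη'}(X). -/
def braFn (d η η' : ℝ) (f g : Pt → ℝ → ℂ) (X : Pt) (p : Pt × ℝ) : ℂ :=
  (starRingEnd ℂ) (f (p.1 - (η / 2) • Jmat X) (p.2 - η * d / 2)) *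
    g (p.1 - (η' / 2) • Jmat X) (p.2 - η' * d / 2)

/-- ((f,g))_d^{ηη'}(X), the interlayer pairing. -/
def bra (d : ℝ) (Ω : Set Pt) (η η' : ℝ) (f g : Pt → ℝ → ℂ) (X : Pt) : ℂ :=
  ∫ p in Ω ×ˢ (Set.univ : Set ℝ), braFn d η η' f g X p

/-- In-plane partial derivative ∂/∂x₁. -/
def dX1 (f : Pt → ℝ → ℂ) (x : Pt) (z : ℝ) : ℂ :=
  fderiv ℝ (fun y => f y z) x ((1 : ℝ), (0 : ℝ))

/-- In-plane partial derivative ∂/∂x₂. -/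
def dX2 (f : Pt → ℝ → ℂ) (x : Pt) (z : ℝ) : ℂ :=
  fderiv ℝ (fun y => f y z) x ((0 : ℝ), (1 : ℝ))


/-! ### Auxiliary infrastructure for stmt15 -/

namespace Stmt15Aux

open MeasureTheory Set Pointwise
open scoped ENNReal

instance : (volume : Measure Pt).IsAddLeftInvariant :=
  (inferInstance : ((volume : Measure ℝ).prod volume).IsAddLeftInvariant)
instance : (volume : Measure Pt).IsAddRightInvariant :=
  (inferInstance : ((volume : Measure ℝ).prod volume).IsAddRightInvariant)
instance : (volume : Measure (Pt × ℝ)).IsAddLeftInvariant :=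
  (inferInstance : ((volume : Measure Pt).prod volume).IsAddLeftInvariant)
instance : (volume : Measure (Pt × ℝ)).IsAddRightInvariant :=
  (inferInstance : ((volume : Measure Pt).prod volume).IsAddRightInvariant)

/-- Countability of the lattice. -/
instance latCountable (a0 : ℝ) : Countable (lat a0) := by
  have hsub : (lat a0 : Set Pt) ⊆
      Set.range (fun mn : ℤ × ℤ => mn.1 • av1 a0 + mn.2 • av2 a0) := by
    intro x hx
    obtain ⟨m, n, h⟩ := (AddSubgroup.mem_closure_pair).1 hx
    exact ⟨(m, n), h⟩
  have : (lat a0 : Set Pt).Countable := (Set.countable_range _).mono hsub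
  exact this.to_subtype

/-- The action of the lattice on `Pt × ℝ` by in-plane translation. -/
instance latVAdd (a0 : ℝ) : VAdd (lat a0) (Pt × ℝ) :=
  ⟨fun g p => ((g : Pt) + p.1, p.2)⟩

lemma vadd_def {a0 : ℝ} (g : lat a0) (p : Pt × ℝ) :
    g +ᵥ p = ((g : Pt) + p.1, p.2) := rfl

instance latAddAction (a0 : ℝ) : AddAction (lat a0) (Pt × ℝ) where
  zero_vadd p := by simp [vadd_def]
  add_vadd g h p := by simp [vadd_def, add_assoc]

instance latMeasurableVAdd (a0 : ℝ) : MeasurableVAdd (lat a0) (Pt × ℝ) where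
  measurable_const_vadd g := by
    simpa [vadd_def] using
      (measurable_fst.const_add (g : Pt)).prodMk measurable_snd
  measurable_vadd_const p := by
    have h1 : Measurable fun g : lat a0 => (g : Pt) := measurable_subtype_coe
    exact (h1.add_const p.1).prodMk measurable_const

instance latVAddInvariant (a0 : ℝ) :
    VAddInvariantMeasure (lat a0) (Pt × ℝ) volume where
  measure_preimage_vadd g s hs := by
    have : (fun p : Pt × ℝ => g +ᵥ p) = (fun p : Pt × ℝ => ((g : Pt), (0:ℝ)) + p) := by
      funext p
      simp [vadd_def, Prod.ext_iff]
    rw [this]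
    exact measure_preimage_add volume _ s

lemma null_prod_univ {s : Set Pt} (h : volume s = 0) :
    volume (s ×ˢ (univ : Set ℝ)) = 0 := by
  obtain ⟨N, hsN, hNm, hN0⟩ := exists_measurable_superset_of_null h
  have h1 : s ×ˢ (univ : Set ℝ) ⊆ N ×ˢ (univ : Set ℝ) :=
    Set.prod_mono hsN subset_rfl
  have h2 : (volume : Measure (Pt × ℝ)) (N ×ˢ (univ : Set ℝ)) = 0 := by
    rw [show (volume : Measure (Pt × ℝ)) = (volume : Measure Pt).prod volume from rfl,
      Measure.prod_prod, hN0, zero_mul]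
  exact le_antisymm (le_trans (measure_mono h1) h2.le) zero_le

/-- Product of a fundamental domain with `ℝ` is a fundamental domain. -/
lemma prodFD {a0 : ℝ} {Ω' : Set Pt}
    (h : IsAddFundamentalDomain (lat a0) Ω' volume) :
    IsAddFundamentalDomain (lat a0) (Ω' ×ˢ (univ : Set ℝ)) volume := by
  constructor
  · exact h.nullMeasurableSet.prod (MeasurableSet.univ.nullMeasurableSet)
  · have h1 := h.ae_covers
    rw [ae_iff] at h1 ⊢
    have hset : {p : Pt × ℝ | ¬∃ g : lat a0, g +ᵥ p ∈ Ω' ×ˢ (univ : Set ℝ)}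
        ⊆ {x : Pt | ¬∃ g : lat a0, g +ᵥ x ∈ Ω'} ×ˢ (univ : Set ℝ) := by
      intro p hp
      refine ⟨fun ⟨g, hg⟩ => hp ⟨g, ?_⟩, trivial⟩
      exact ⟨hg, trivial⟩
    exact le_antisymm (le_trans (measure_mono hset) (null_prod_univ h1).le) zero_le
  · intro g g' hgg'
    have h2 := h.aedisjoint hgg'
    have himg : ∀ (k : lat a0), (k +ᵥ (Ω' ×ˢ (univ : Set ℝ)))
        = (k +ᵥ Ω') ×ˢ (univ : Set ℝ) := by
      intro k
      ext p
      constructor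
      · rintro ⟨q, hq, rfl⟩
        exact ⟨⟨q.1, hq.1, rfl⟩, trivial⟩
      · rintro ⟨⟨y, hy, hyp⟩, -⟩
        exact ⟨(y, p.2), ⟨hy, trivial⟩, Prod.ext hyp rfl⟩
    rw [Function.onFun, himg, himg]
    have hsub : ((g +ᵥ Ω') ×ˢ (univ : Set ℝ)) ∩ ((g' +ᵥ Ω') ×ˢ (univ : Set ℝ))
        = ((g +ᵥ Ω') ∩ (g' +ᵥ Ω')) ×ˢ (univ : Set ℝ) := by
      rw [Set.prod_inter_prod, Set.univ_inter]
    unfold AEDisjoint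
    rw [hsub]
    exact null_prod_univ h2

end Stmt15Aux

namespace Stmt15Aux

open MeasureTheory Set Pointwise
open scoped ENNReal

/-- Master change-of-variables lemma over the fundamental domain. -/
lemma setIntegral_comp_homeo {E : Type*} [NormedAddCommGroup E] [NormedSpace ℝ E]
    {a0 : ℝ} {Ω : Set Pt}
    (hΩ : IsAddFundamentalDomain (lat a0) Ω volume)
    (T : Homeomorph (Pt × ℝ) (Pt × ℝ))
    (hT : MeasurePreserving T volume volume)
    (hTs : MeasurePreserving T.symm volume volume)
    (e : lat a0 ≃ lat a0)
    (hsemi : ∀ (g : lat a0) (p : Pt × ℝ), T (e g +ᵥ p) = g +ᵥ T p)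
    (f : Pt × ℝ → E) (hf : ∀ (g : lat a0) (p : Pt × ℝ), f (g +ᵥ p) = f p) :
    ((∫ p in Ω ×ˢ (univ : Set ℝ), f (T p)) = ∫ p in Ω ×ˢ (univ : Set ℝ), f p)
    ∧ (IntegrableOn (fun p => f (T p)) (Ω ×ˢ (univ : Set ℝ)) volume ↔
        IntegrableOn f (Ω ×ˢ (univ : Set ℝ)) volume) := by
  have hD := prodFD hΩ
  have fdT : IsAddFundamentalDomain (lat a0)
      (T.toEquiv '' (Ω ×ˢ (univ : Set ℝ))) volume :=
    hD.image_of_equiv T.toEquiv hTs.quasiMeasurePreserving e hsemi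
  have h1 : ∫ p in (⇑T '' (Ω ×ˢ (univ : Set ℝ))), f p
      = ∫ p in Ω ×ˢ (univ : Set ℝ), f (T p) :=
    hT.setIntegral_image_emb T.measurableEmbedding f _
  have h2 : ∫ p in (⇑T '' (Ω ×ˢ (univ : Set ℝ))), f p
      = ∫ p in Ω ×ˢ (univ : Set ℝ), f p :=
    fdT.setIntegral_eq hD hf
  have h3 : IntegrableOn f (⇑T '' (Ω ×ˢ (univ : Set ℝ))) volume ↔
      IntegrableOn (fun p => f (T p)) (Ω ×ˢ (univ : Set ℝ)) volume :=
    hT.integrableOn_image T.measurableEmbedding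
  have h4 : IntegrableOn f (⇑T '' (Ω ×ˢ (univ : Set ℝ))) volume ↔
      IntegrableOn f (Ω ×ˢ (univ : Set ℝ)) volume :=
    fdT.integrableOn_iff hD hf
  exact ⟨h1.symm.trans h2, h3.symm.trans h4⟩

/-- Translation version. -/
lemma setIntegral_translate {E : Type*} [NormedAddCommGroup E] [NormedSpace ℝ E]
    {a0 : ℝ} {Ω : Set Pt}
    (hΩ : IsAddFundamentalDomain (lat a0) Ω volume)
    (q : Pt × ℝ)
    (f : Pt × ℝ → E) (hf : ∀ (g : lat a0) (p : Pt × ℝ), f (g +ᵥ p) = f p) :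
    ((∫ p in Ω ×ˢ (univ : Set ℝ), f (p + q)) = ∫ p in Ω ×ˢ (univ : Set ℝ), f p)
    ∧ (IntegrableOn (fun p => f (p + q)) (Ω ×ˢ (univ : Set ℝ)) volume ↔
        IntegrableOn f (Ω ×ˢ (univ : Set ℝ)) volume) := by
  have hT : MeasurePreserving (Homeomorph.addRight q) volume volume :=
    measurePreserving_add_right _ q
  have hTs : MeasurePreserving (Homeomorph.addRight q).symm volume volume := by
    have h : ⇑(Homeomorph.addRight q).symm = fun p : Pt × ℝ => p + (-q) := by
      funext p
      show p - q = p + (-q)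
      rw [sub_eq_add_neg]
    rw [h]
    exact measurePreserving_add_right _ (-q)
  have := setIntegral_comp_homeo hΩ (Homeomorph.addRight q) hT hTs (Equiv.refl _)
    (fun g p => by
      simp only [Equiv.refl_apply, vadd_def, Homeomorph.coe_addRight]
      exact Prod.ext (add_assoc _ _ _) rfl)
    f hf
  simpa [Homeomorph.coe_addRight] using this

lemma reflect_mem {a0 : ℝ} {x : Pt} (hx : x ∈ lat a0) : ((x.1, -x.2) : Pt) ∈ lat a0 := by
  obtain ⟨m, n, rfl⟩ := (AddSubgroup.mem_closure_pair).1 hx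
  refine (AddSubgroup.mem_closure_pair).2 ⟨n, m, ?_⟩
  refine Prod.ext ?_ ?_ <;>
    simp only [Prod.fst_add, Prod.snd_add, Prod.smul_fst, Prod.smul_snd,
      Prod.fst_neg, Prod.snd_neg] <;>
    simp only [av1, av2] <;>
    simp only [zsmul_eq_mul] <;> ring

/-- The reflection on the lattice. -/
def reflL (a0 : ℝ) : lat a0 ≃ lat a0 where
  toFun g := ⟨((g : Pt).1, -(g : Pt).2), reflect_mem g.2⟩
  invFun g := ⟨((g : Pt).1, -(g : Pt).2), reflect_mem g.2⟩
  left_inv g := Subtype.ext (by simp [Prod.ext_iff])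
  right_inv g := Subtype.ext (by simp [Prod.ext_iff])

/-- The reflection homeomorphism ρ(x₁,x₂,z) = (x₁,−x₂,−z). -/
def ρh : Homeomorph (Pt × ℝ) (Pt × ℝ) :=
  ((Homeomorph.refl ℝ).prodCongr (Homeomorph.neg ℝ)).prodCongr (Homeomorph.neg ℝ)

lemma ρh_apply (p : Pt × ℝ) : ρh p = ((p.1.1, -p.1.2), -p.2) := rfl

lemma ρh_symm_apply (p : Pt × ℝ) : ρh.symm p = ((p.1.1, -p.1.2), -p.2) := rfl

lemma ρh_mp : MeasurePreserving ρh volume volume := by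
  have h1 : MeasurePreserving (fun x : ℝ => -x) volume volume :=
    Measure.measurePreserving_neg _
  have h2 : MeasurePreserving (Prod.map (fun x : ℝ => x) (fun x : ℝ => -x))
      ((volume : Measure ℝ).prod volume) ((volume : Measure ℝ).prod volume) :=
    (MeasurePreserving.id _).prod h1
  have h3 : MeasurePreserving
      (Prod.map (Prod.map (fun x : ℝ => x) (fun x : ℝ => -x)) (fun x : ℝ => -x))
      (((volume : Measure ℝ).prod volume).prod volume)
      (((volume : Measure ℝ).prod volume).prod volume) := h2.prod h1
  exact h3

/-- Reflection version. -/
lemma setIntegral_reflect {a0 : ℝ} {Ω : Set Pt}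
    (hΩ : IsAddFundamentalDomain (lat a0) Ω volume)
    (f : Pt × ℝ → ℂ) (hf : ∀ (g : lat a0) (p : Pt × ℝ), f (g +ᵥ p) = f p) :
    (∫ p in Ω ×ˢ (univ : Set ℝ), f ((p.1.1, -p.1.2), -p.2))
      = ∫ p in Ω ×ˢ (univ : Set ℝ), f p := by
  have hTs : MeasurePreserving ρh.symm volume volume := by
    have h : ⇑(ρh.symm) = ⇑ρh := by funext p; rfl
    rw [h]; exact ρh_mp
  have := setIntegral_comp_homeo hΩ ρh ρh_mp hTs (reflL a0)
    (fun g p => by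
      refine Prod.ext (Prod.ext rfl ?_) rfl
      show -(-(g : Pt).2 + p.1.2) = (g : Pt).2 + -p.1.2
      ring)
    f hf
  exact this.1

end Stmt15Aux

namespace Stmt15Aux

open MeasureTheory Set Pointwise ContinuousLinearMap

/-- The function on the product space. -/
def fullF (Φ : Pt → ℝ → ℂ) : Pt × ℝ → ℂ := fun p => Φ p.1 p.2

lemma dX1_eq_of_hasFDerivAt {Φ : Pt → ℝ → ℂ} {z : ℝ} {x : Pt} {L : Pt →L[ℝ] ℂ}
    (h : HasFDerivAt (fun y => Φ y z) L x) : dX1 Φ x z = L ((1 : ℝ), (0 : ℝ)) := by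
  rw [dX1, h.fderiv]

/-- Partial map has derivative given by the full derivative composed with `inl`. -/
lemma hasFDerivAt_partial {Φ : Pt → ℝ → ℂ} (hc : ContDiff ℝ 1 (fullF Φ))
    (x : Pt) (z : ℝ) :
    HasFDerivAt (fun y => Φ y z)
      ((fderiv ℝ (fullF Φ) (x, z)).comp (inl ℝ Pt ℝ)) x :=
  by have := ((hc.differentiable one_ne_zero (x, z)).hasFDerivAt).comp x (hasFDerivAt_prodMk_left (𝕜 := ℝ) x z); exact this

lemma dX1_eq_full {Φ : Pt → ℝ → ℂ} (hc : ContDiff ℝ 1 (fullF Φ)) (x : Pt) (z : ℝ) :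
    dX1 Φ x z = fderiv ℝ (fullF Φ) (x, z) (((1 : ℝ), (0 : ℝ)), (0 : ℝ)) := by
  rw [dX1_eq_of_hasFDerivAt (hasFDerivAt_partial hc x z)]
  simp

/-- Quasiperiodicity of the in-plane derivative. -/
lemma dX1_quasi {a0 : ℝ} {Φ : Pt → ℝ → ℂ} (hc : ContDiff ℝ 1 (fullF Φ))
    (hq : KQuasiperiodic a0 Φ) :
    ∀ R ∈ lat a0, ∀ (x : Pt) (z : ℝ),
      dX1 Φ (x + R) z = Complex.exp (Complex.I * (dot (Kpt a0) R : ℂ)) * dX1 Φ x z := by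
  intro R hR x z
  set c := Complex.exp (Complex.I * (dot (Kpt a0) R : ℂ)) with hc'
  have h1 : (fun y : Pt => Φ (y + R) z) = fun y => c * Φ y z :=
    funext fun y => hq R hR y z
  have hA : HasFDerivAt (fun y : Pt => Φ (y + R) z)
      (((fderiv ℝ (fullF Φ) (x + R, z)).comp (inl ℝ Pt ℝ)).comp
        (ContinuousLinearMap.id ℝ Pt)) x :=
    by have := (hasFDerivAt_partial hc (x + R) z).comp x ((hasFDerivAt_id (𝕜 := ℝ) x).add_const R); exact this
  have hB : HasFDerivAt (fun y : Pt => c * Φ y z)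
      (c • ((fderiv ℝ (fullF Φ) (x, z)).comp (inl ℝ Pt ℝ))) x :=
    (hasFDerivAt_partial hc x z).const_mul c
  rw [h1] at hA
  have heq := hA.unique hB
  have happ := congrArg (fun L : Pt →L[ℝ] ℂ => L ((1 : ℝ), (0 : ℝ))) heq
  simp only [coe_comp', Function.comp_apply, coe_id', id_eq, smul_apply, smul_eq_mul] at happ
  rw [dX1_eq_of_hasFDerivAt (hasFDerivAt_partial hc (x + R) z),
    dX1_eq_of_hasFDerivAt (hasFDerivAt_partial hc x z)]
  simpa using happ

/-- The in-plane reflection as a continuous linear map. -/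
def mσ : Pt →L[ℝ] Pt := (ContinuousLinearMap.fst ℝ ℝ ℝ).prod (-(ContinuousLinearMap.snd ℝ ℝ ℝ))

lemma mσ_apply (x : Pt) : mσ x = (x.1, -x.2) := rfl

/-- Reflection identity for the in-plane derivative. -/
lemma dX1_reflect {Φ₁ Φ₂ : Pt → ℝ → ℂ} {s : ℝ}
    (hc₁ : ContDiff ℝ 1 (fullF Φ₁)) (hc₂ : ContDiff ℝ 1 (fullF Φ₂))
    (hsym : ∀ (x : Pt) (z : ℝ), Φ₂ x z = (s : ℂ) * Φ₁ (x.1, -x.2) (-z)) (x : Pt) (z : ℝ) :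
    dX1 Φ₂ (x.1, -x.2) (-z) = (s : ℂ) * dX1 Φ₁ x z := by
  set y₀ : Pt := (x.1, -x.2) with hy₀
  have hmx : mσ y₀ = x := by
    rw [mσ_apply]
    exact Prod.ext rfl (neg_neg _)
  have h1 : (fun y : Pt => Φ₂ y (-z)) = fun y => (s : ℂ) * Φ₁ (mσ y) z := by
    funext y
    rw [hsym y (-z), neg_neg, mσ_apply]
  have hA := hasFDerivAt_partial hc₂ y₀ (-z)
  have hinner : HasFDerivAt (fun y : Pt => Φ₁ (mσ y) z)
      (((fderiv ℝ (fullF Φ₁) (mσ y₀, z)).comp (inl ℝ Pt ℝ)).comp mσ) y₀ :=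
    (hasFDerivAt_partial hc₁ (mσ y₀) z).comp y₀ (mσ.hasFDerivAt)
  have hB : HasFDerivAt (fun y : Pt => (s : ℂ) * Φ₁ (mσ y) z)
      ((s : ℂ) • (((fderiv ℝ (fullF Φ₁) (mσ y₀, z)).comp (inl ℝ Pt ℝ)).comp mσ)) y₀ :=
    hinner.const_mul _
  rw [h1] at hA
  have heq := hA.unique hB
  have happ := congrArg (fun L : Pt →L[ℝ] ℂ => L ((1 : ℝ), (0 : ℝ))) heq
  simp only [coe_comp', Function.comp_apply, smul_apply, smul_eq_mul] at happ
  rw [dX1_eq_of_hasFDerivAt (hasFDerivAt_partial hc₂ y₀ (-z)),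
    dX1_eq_of_hasFDerivAt (hasFDerivAt_partial hc₁ x z)]
  rw [hmx] at happ
  have hm1 : mσ ((1 : ℝ), (0 : ℝ)) = ((1 : ℝ), (0 : ℝ)) := by
    rw [mσ_apply]
    exact Prod.ext rfl (neg_zero)
  rw [hm1] at happ
  simpa using happ

end Stmt15Aux

namespace Stmt15Aux

open MeasureTheory Set Pointwise ContinuousLinearMap
open scoped ENNReal

local notation "conj'" => (starRingEnd ℂ)

lemma phase_mul_conj (θ : ℝ) :
    Complex.exp (Complex.I * (θ : ℂ)) * conj' (Complex.exp (Complex.I * (θ : ℂ))) = 1 := by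
  have h : conj' (Complex.exp (Complex.I * (θ : ℂ)))
      = Complex.exp (-(Complex.I * (θ : ℂ))) := by
    rw [← Complex.exp_conj]
    congr 1
    simp [Complex.conj_ofReal]
  rw [h, ← Complex.exp_add, add_neg_cancel, Complex.exp_zero]

/-- The direction `e₁`. -/
def e₁ : Pt × ℝ := (((1 : ℝ), (0 : ℝ)), (0 : ℝ))

section Core

variable {a0 : ℝ} (Φ₁ Φ₂ : Pt → ℝ → ℂ)

/-- The periodic product `conj Φ₁ · Φ₂`. -/
def Fp : Pt × ℝ → ℂ := fun p => conj' (Φ₁ p.1 p.2) * Φ₂ p.1 p.2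

/-- Its in-plane `x₁`-derivative. -/
def Gp : Pt × ℝ → ℂ := fun p =>
  conj' (Φ₁ p.1 p.2) * dX1 Φ₂ p.1 p.2 + Φ₂ p.1 p.2 * conj' (dX1 Φ₁ p.1 p.2)

variable {Φ₁ Φ₂}
variable (hc₁ : ContDiff ℝ 1 (fullF Φ₁)) (hc₂ : ContDiff ℝ 1 (fullF Φ₂))
include hc₁ hc₂

lemma hFpc : ContDiff ℝ 1 (Fp Φ₁ Φ₂) := by
  have h1 : ContDiff ℝ 1 (fun p : Pt × ℝ => conj' (Φ₁ p.1 p.2)) := by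
    rw [show (fun p : Pt × ℝ => conj' (Φ₁ p.1 p.2))
        = ⇑Complex.conjCLE.toContinuousLinearMap ∘ (fullF Φ₁) from rfl]
    exact Complex.conjCLE.toContinuousLinearMap.contDiff.comp hc₁
  exact h1.mul hc₂

lemma hasFDerivAt_Fp (p : Pt × ℝ) :
    HasFDerivAt (Fp Φ₁ Φ₂)
      (conj' (Φ₁ p.1 p.2) • (fderiv ℝ (fullF Φ₂) p) +
        Φ₂ p.1 p.2 • (Complex.conjCLE.toContinuousLinearMap.comp (fderiv ℝ (fullF Φ₁) p))) p := by
  have h1 : HasFDerivAt (fullF Φ₁) (fderiv ℝ (fullF Φ₁) p) p :=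
    (hc₁.differentiable one_ne_zero p).hasFDerivAt
  have h2 : HasFDerivAt (fullF Φ₂) (fderiv ℝ (fullF Φ₂) p) p :=
    (hc₂.differentiable one_ne_zero p).hasFDerivAt
  have hcj : HasFDerivAt (fun q : Pt × ℝ => conj' (Φ₁ q.1 q.2))
      (Complex.conjCLE.toContinuousLinearMap.comp (fderiv ℝ (fullF Φ₁) p)) p :=
    Complex.conjCLE.toContinuousLinearMap.hasFDerivAt.comp p h1
  exact hcj.mul h2

lemma Gp_eq_fderiv (p : Pt × ℝ) : Gp Φ₁ Φ₂ p = fderiv ℝ (Fp Φ₁ Φ₂) p e₁ := by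
  rw [(hasFDerivAt_Fp hc₁ hc₂ p).fderiv]
  simp only [add_apply, smul_apply, smul_eq_mul, coe_comp', Function.comp_apply]
  rw [Gp, dX1_eq_full hc₁ p.1 p.2, dX1_eq_full hc₂ p.1 p.2]
  rfl

lemma hGpcont : Continuous (Gp Φ₁ Φ₂) := by
  rw [show Gp Φ₁ Φ₂ = fun p => fderiv ℝ (Fp Φ₁ Φ₂) p e₁ from
    funext fun p => Gp_eq_fderiv hc₁ hc₂ p]
  exact ((hFpc hc₁ hc₂).continuous_fderiv one_ne_zero).clm_apply continuous_const

lemma hasDerivAt_line (p : Pt × ℝ) (t : ℝ) :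
    HasDerivAt (fun u : ℝ => Fp Φ₁ Φ₂ (p + u • e₁)) (Gp Φ₁ Φ₂ (p + t • e₁)) t := by
  have hline : HasDerivAt (fun u : ℝ => p + u • e₁) e₁ t := by
    simpa using ((hasDerivAt_id t).smul_const e₁).const_add p
  have := (hasFDerivAt_Fp hc₁ hc₂ (p + t • e₁)).comp_hasDerivAt t hline
  rw [Gp_eq_fderiv hc₁ hc₂, (hasFDerivAt_Fp hc₁ hc₂ (p + t • e₁)).fderiv]
  exact this

lemma key_FTC (p : Pt × ℝ) :
    Fp Φ₁ Φ₂ (p + e₁) - Fp Φ₁ Φ₂ p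
      = ∫ t in Ioc (0 : ℝ) 1, Gp Φ₁ Φ₂ (p + t • e₁) := by
  have hcont : Continuous fun t : ℝ => Gp Φ₁ Φ₂ (p + t • e₁) :=
    (hGpcont hc₁ hc₂).comp (by continuity)
  have h := intervalIntegral.integral_eq_sub_of_hasDerivAt
    (f := fun u : ℝ => Fp Φ₁ Φ₂ (p + u • e₁))
    (f' := fun u : ℝ => Gp Φ₁ Φ₂ (p + u • e₁))
    (fun t _ => hasDerivAt_line hc₁ hc₂ p t)
    (hcont.intervalIntegrable 0 1)
  rw [intervalIntegral.integral_of_le zero_le_one] at h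
  simp only [one_smul, zero_smul, add_zero] at h
  exact h.symm

end Core

section Periodic

variable {a0 : ℝ} {Φ₁ Φ₂ : Pt → ℝ → ℂ}

lemma quasi_vadd (hq : KQuasiperiodic a0 Φ₁) (g : lat a0) (x : Pt) (z : ℝ) :
    Φ₁ ((g : Pt) + x) z
      = Complex.exp (Complex.I * (dot (Kpt a0) (g : Pt) : ℂ)) * Φ₁ x z := by
  rw [add_comm]
  exact hq (g : Pt) g.2 x z

lemma dX1_quasi_vadd (hc : ContDiff ℝ 1 (fullF Φ₁)) (hq : KQuasiperiodic a0 Φ₁)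
    (g : lat a0) (x : Pt) (z : ℝ) :
    dX1 Φ₁ ((g : Pt) + x) z
      = Complex.exp (Complex.I * (dot (Kpt a0) (g : Pt) : ℂ)) * dX1 Φ₁ x z := by
  rw [add_comm]
  exact dX1_quasi hc hq (g : Pt) g.2 x z

lemma hFper (hq₁ : KQuasiperiodic a0 Φ₁) (hq₂ : KQuasiperiodic a0 Φ₂)
    (g : lat a0) (p : Pt × ℝ) : Fp Φ₁ Φ₂ (g +ᵥ p) = Fp Φ₁ Φ₂ p := by
  rw [vadd_def, Fp, Fp]
  simp only
  rw [quasi_vadd hq₁, quasi_vadd hq₂, map_mul]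
  set c := Complex.exp (Complex.I * (dot (Kpt a0) (g : Pt) : ℂ))
  have h1 : c * conj' c = 1 := phase_mul_conj _
  ring_nf
  ring_nf at h1
  calc conj' c * conj' (Φ₁ p.1 p.2) * c * Φ₂ p.1 p.2
      = (c * conj' c) * (conj' (Φ₁ p.1 p.2) * Φ₂ p.1 p.2) := by ring
    _ = conj' (Φ₁ p.1 p.2) * Φ₂ p.1 p.2 := by rw [h1, one_mul]

lemma hGper (hc₁ : ContDiff ℝ 1 (fullF Φ₁)) (hc₂ : ContDiff ℝ 1 (fullF Φ₂))
    (hq₁ : KQuasiperiodic a0 Φ₁) (hq₂ : KQuasiperiodic a0 Φ₂)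
    (g : lat a0) (p : Pt × ℝ) : Gp Φ₁ Φ₂ (g +ᵥ p) = Gp Φ₁ Φ₂ p := by
  rw [vadd_def, Gp, Gp]
  simp only
  rw [quasi_vadd hq₁, quasi_vadd hq₂, dX1_quasi_vadd hc₁ hq₁, dX1_quasi_vadd hc₂ hq₂,
    map_mul, map_mul]
  set c := Complex.exp (Complex.I * (dot (Kpt a0) (g : Pt) : ℂ))
  have h1 : c * conj' c = 1 := phase_mul_conj _
  calc conj' c * conj' (Φ₁ p.1 p.2) * (c * dX1 Φ₂ p.1 p.2)
        + c * Φ₂ p.1 p.2 * (conj' c * conj' (dX1 Φ₁ p.1 p.2))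
      = (c * conj' c) * (conj' (Φ₁ p.1 p.2) * dX1 Φ₂ p.1 p.2)
        + (c * conj' c) * (Φ₂ p.1 p.2 * conj' (dX1 Φ₁ p.1 p.2)) := by ring
    _ = _ := by rw [h1]; ring

/-- Periodicity of `Φ₁ · conj (dX1 Φ₂)`. -/
lemma hHper (hc₂ : ContDiff ℝ 1 (fullF Φ₂))
    (hq₁ : KQuasiperiodic a0 Φ₁) (hq₂ : KQuasiperiodic a0 Φ₂)
    (g : lat a0) (p : Pt × ℝ) :
    Φ₁ ((g +ᵥ p).1) ((g +ᵥ p).2) * conj' (dX1 Φ₂ ((g +ᵥ p).1) ((g +ᵥ p).2))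
      = Φ₁ p.1 p.2 * conj' (dX1 Φ₂ p.1 p.2) := by
  rw [vadd_def]
  simp only
  rw [quasi_vadd hq₁, dX1_quasi_vadd hc₂ hq₂, map_mul]
  set c := Complex.exp (Complex.I * (dot (Kpt a0) (g : Pt) : ℂ))
  have h1 : c * conj' c = 1 := phase_mul_conj _
  calc c * Φ₁ p.1 p.2 * (conj' c * conj' (dX1 Φ₂ p.1 p.2))
      = (c * conj' c) * (Φ₁ p.1 p.2 * conj' (dX1 Φ₂ p.1 p.2)) := by ring
    _ = _ := by rw [h1]; ring

end Periodic

section L2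

variable {ν : Measure (Pt × ℝ)}

lemma memL2_conj {f : Pt × ℝ → ℂ} (h : MemLp f 2 ν) :
    MemLp (fun x => conj' (f x)) 2 ν :=
  h.of_le (continuous_star.comp_aestronglyMeasurable h.1) (ae_of_all _ fun x => by simp)

lemma integrable_mul_L2 {f g : Pt × ℝ → ℂ} (hf : MemLp f 2 ν) (hg : MemLp g 2 ν) :
    Integrable (fun x => f x * g x) ν := by
  have h2 : (1 : ℝ≥0∞) / 1 = 1 / 2 + 1 / 2 := by
    rw [ENNReal.div_add_div_same]
    norm_num
    exact (ENNReal.div_self (by norm_num) (by norm_num)).symm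
  haveI : ENNReal.HolderTriple 2 2 1 := ⟨by rw [ENNReal.inv_two_add_inv_two, inv_one]⟩
  have h := MemLp.smul (r := 1) hg hf
  rw [memLp_one_iff_integrable] at h
  exact h

end L2

end Stmt15Aux

namespace Stmt15Aux

open MeasureTheory Set Pointwise
open scoped ENNReal

local notation "conj'" => (starRingEnd ℂ)

/-- Integration by parts: the integral of the x₁-derivative of the periodic
function `conj Φ₁ · Φ₂` over the fundamental domain vanishes. -/
lemma integral_Gp_zero {a0 : ℝ} {Ω : Set Pt} {Φ₁ Φ₂ : Pt → ℝ → ℂ}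
    (hΩ : IsAddFundamentalDomain (lat a0) Ω volume)
    (hc₁ : ContDiff ℝ 1 (fullF Φ₁)) (hc₂ : ContDiff ℝ 1 (fullF Φ₂))
    (hq₁ : KQuasiperiodic a0 Φ₁) (hq₂ : KQuasiperiodic a0 Φ₂)
    (hGint : IntegrableOn (Gp Φ₁ Φ₂) (Ω ×ˢ (univ : Set ℝ)) volume)
    (hFint : IntegrableOn (Fp Φ₁ Φ₂) (Ω ×ˢ (univ : Set ℝ)) volume) :
    (∫ p in Ω ×ˢ (univ : Set ℝ), Gp Φ₁ Φ₂ p) = 0 := by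
  set D : Set (Pt × ℝ) := Ω ×ˢ (univ : Set ℝ) with hD
  set C : ℂ := ∫ p in D, Gp Φ₁ Φ₂ p with hC
  have hGper' : ∀ (g : lat a0) (p : Pt × ℝ), Gp Φ₁ Φ₂ (g +ᵥ p) = Gp Φ₁ Φ₂ p :=
    hGper hc₁ hc₂ hq₁ hq₂
  have hFper' : ∀ (g : lat a0) (p : Pt × ℝ), Fp Φ₁ Φ₂ (g +ᵥ p) = Fp Φ₁ Φ₂ p :=
    hFper hq₁ hq₂
  have hGnorm_per : ∀ (g : lat a0) (p : Pt × ℝ),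
      ‖Gp Φ₁ Φ₂ (g +ᵥ p)‖ = ‖Gp Φ₁ Φ₂ p‖ := fun g p => by rw [hGper' g p]
  -- translates
  have stepG : ∀ q : Pt × ℝ,
      ((∫ p in D, Gp Φ₁ Φ₂ (p + q)) = C) ∧
        IntegrableOn (fun p => Gp Φ₁ Φ₂ (p + q)) D volume := by
    intro q
    have h := setIntegral_translate hΩ q (Gp Φ₁ Φ₂) hGper'
    exact ⟨h.1, h.2.mpr hGint⟩
  have stepGnorm : ∀ q : Pt × ℝ,
      (∫ p in D, ‖Gp Φ₁ Φ₂ (p + q)‖) = ∫ p in D, ‖Gp Φ₁ Φ₂ p‖ := by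
    intro q
    exact (setIntegral_translate hΩ q (fun p => ‖Gp Φ₁ Φ₂ p‖) hGnorm_per).1
  have stepF := setIntegral_translate hΩ e₁ (Fp Φ₁ Φ₂) hFper'
  -- LHS is zero
  have hFtrans_int : IntegrableOn (fun p => Fp Φ₁ Φ₂ (p + e₁)) D volume :=
    stepF.2.mpr hFint
  have hLHS0 : (∫ p in D, (Fp Φ₁ Φ₂ (p + e₁) - Fp Φ₁ Φ₂ p)) = 0 := by
    rw [integral_sub hFtrans_int hFint, stepF.1, sub_self]
  -- FTC rewriting
  have hLHS1 : (∫ p in D, (Fp Φ₁ Φ₂ (p + e₁) - Fp Φ₁ Φ₂ p))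
      = ∫ p in D, (∫ t in Ioc (0 : ℝ) 1, Gp Φ₁ Φ₂ (p + t • e₁)) :=
    integral_congr_ae (Filter.Eventually.of_forall fun p => key_FTC hc₁ hc₂ p)
  -- Fubini
  set μD : Measure (Pt × ℝ) := volume.restrict D with hμD
  set μI : Measure ℝ := volume.restrict (Ioc (0 : ℝ) 1) with hμI
  have hu_cont : Continuous fun q : ℝ × (Pt × ℝ) => Gp Φ₁ Φ₂ (q.2 + q.1 • e₁) :=
    (hGpcont hc₁ hc₂).comp (continuous_snd.add (continuous_fst.smul continuous_const))
  have hu_meas : AEStronglyMeasurable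
      (Function.uncurry fun t (p : Pt × ℝ) => Gp Φ₁ Φ₂ (p + t • e₁)) (μI.prod μD) :=
    hu_cont.aestronglyMeasurable
  have hu_int : Integrable
      (Function.uncurry fun t (p : Pt × ℝ) => Gp Φ₁ Φ₂ (p + t • e₁)) (μI.prod μD) := by
    rw [integrable_prod_iff hu_meas]
    constructor
    · exact Filter.Eventually.of_forall fun t => (stepG (t • e₁)).2
    · have hconst : (fun t : ℝ => ∫ p, ‖Gp Φ₁ Φ₂ (p + t • e₁)‖ ∂μD)
          = fun _ : ℝ => ∫ p in D, ‖Gp Φ₁ Φ₂ p‖ := by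
        funext t
        exact stepGnorm (t • e₁)
      simp only [Function.uncurry_apply_pair]
      rw [hconst]
      refine integrable_const_iff.2 (Or.inr ?_)
      rw [hμI]
      exact isFiniteMeasure_restrict.2 measure_Ioc_lt_top.ne
  have hswap := integral_integral_swap
    (f := fun t (p : Pt × ℝ) => Gp Φ₁ Φ₂ (p + t • e₁)) hu_int
  -- assemble
  have h2 : (∫ p in D, (∫ t in Ioc (0 : ℝ) 1, Gp Φ₁ Φ₂ (p + t • e₁))) = C := by
    have h3 : (∫ t, (∫ p, Gp Φ₁ Φ₂ (p + t • e₁) ∂μD) ∂μI) = C := by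
      have h4 : (fun t : ℝ => ∫ p, Gp Φ₁ Φ₂ (p + t • e₁) ∂μD) = fun _ => C := by
        funext t
        exact (stepG (t • e₁)).1
      rw [h4]
      rw [hμI, setIntegral_const]
      simp [Real.volume_Ioc]
    rw [← h3, ← hswap]
  rw [← h2, ← hLHS1, hLHS0]

end Stmt15Aux

open Stmt15Aux

/-- if Φ₂(x₁,x₂,z) = s·Φ₁(x₁,−x₂,−z) for some sign s, then
v := ∫ conj(Φ₁)(−i∂_{x₁}Φ₂) is real. -/
theorem stmt15 (a0 : ℝ) (ha0 : 0 < a0) (Ω : Set Pt)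
    (hΩ : IsAddFundamentalDomain (lat a0) Ω volume)
    (Φ₁ Φ₂ : Pt → ℝ → ℂ)
    (hΦ₁c : ContDiff ℝ 1 (fun p : Pt × ℝ => Φ₁ p.1 p.2))
    (hΦ₂c : ContDiff ℝ 1 (fun p : Pt × ℝ => Φ₂ p.1 p.2))
    (hΦ₁q : KQuasiperiodic a0 Φ₁) (hΦ₂q : KQuasiperiodic a0 Φ₂)
    (hΦ₁2 : MemLp (fun p : Pt × ℝ => Φ₁ p.1 p.2) 2
      (volume.restrict (Ω ×ˢ (Set.univ : Set ℝ))))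
    (hΦ₂2 : MemLp (fun p : Pt × ℝ => Φ₂ p.1 p.2) 2
      (volume.restrict (Ω ×ˢ (Set.univ : Set ℝ))))
    (hΦ₁d1 : MemLp (fun p : Pt × ℝ => dX1 Φ₁ p.1 p.2) 2
      (volume.restrict (Ω ×ˢ (Set.univ : Set ℝ))))
    (hΦ₁d2 : MemLp (fun p : Pt × ℝ => dX2 Φ₁ p.1 p.2) 2
      (volume.restrict (Ω ×ˢ (Set.univ : Set ℝ))))
    (hΦ₂d1 : MemLp (fun p : Pt × ℝ => dX1 Φ₂ p.1 p.2) 2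
      (volume.restrict (Ω ×ˢ (Set.univ : Set ℝ))))
    (hΦ₂d2 : MemLp (fun p : Pt × ℝ => dX2 Φ₂ p.1 p.2) 2
      (volume.restrict (Ω ×ˢ (Set.univ : Set ℝ))))
    (s : ℝ) (hs : s = 1 ∨ s = -1)
    (hsym : ∀ (x : Pt) (z : ℝ), Φ₂ x z = (s : ℂ) * Φ₁ (x.1, -x.2) (-z)) :
    (∫ p in Ω ×ˢ (Set.univ : Set ℝ),
        (starRingEnd ℂ) (Φ₁ p.1 p.2) * (-Complex.I * dX1 Φ₂ p.1 p.2)) =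
      (starRingEnd ℂ) (∫ p in Ω ×ˢ (Set.univ : Set ℝ),
        (starRingEnd ℂ) (Φ₁ p.1 p.2) * (-Complex.I * dX1 Φ₂ p.1 p.2)) := by
  have hc₁ : ContDiff ℝ 1 (fullF Φ₁) := hΦ₁c
  have hc₂ : ContDiff ℝ 1 (fullF Φ₂) := hΦ₂c
  have hss : (s : ℂ) * (s : ℂ) = 1 := by
    rcases hs with h | h <;> norm_num [h]
  set D : Set (Pt × ℝ) := Ω ×ˢ (Set.univ : Set ℝ) with hD
  set A : ℂ := ∫ p in D, (starRingEnd ℂ) (Φ₁ p.1 p.2) * dX1 Φ₂ p.1 p.2 with hA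
  set B : ℂ := ∫ p in D, Φ₂ p.1 p.2 * (starRingEnd ℂ) (dX1 Φ₁ p.1 p.2) with hB
  set A' : ℂ := ∫ p in D, Φ₁ p.1 p.2 * (starRingEnd ℂ) (dX1 Φ₂ p.1 p.2) with hA'
  -- integrability
  have hA_int : Integrable (fun p : Pt × ℝ =>
      (starRingEnd ℂ) (Φ₁ p.1 p.2) * dX1 Φ₂ p.1 p.2) (volume.restrict D) :=
    integrable_mul_L2 (memL2_conj hΦ₁2) hΦ₂d1
  have hB_int : Integrable (fun p : Pt × ℝ =>
      Φ₂ p.1 p.2 * (starRingEnd ℂ) (dX1 Φ₁ p.1 p.2)) (volume.restrict D) :=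
    integrable_mul_L2 hΦ₂2 (memL2_conj hΦ₁d1)
  have hGint : IntegrableOn (Gp Φ₁ Φ₂) D volume := hA_int.add hB_int
  have hFint : IntegrableOn (Fp Φ₁ Φ₂) D volume :=
    integrable_mul_L2 (memL2_conj hΦ₁2) hΦ₂2
  -- integration by parts
  have hC0 : (∫ p in D, Gp Φ₁ Φ₂ p) = 0 :=
    integral_Gp_zero hΩ hc₁ hc₂ hΦ₁q hΦ₂q hGint hFint
  have hAB : A + B = 0 := by
    rw [hA, hB, ← integral_add hA_int hB_int]
    exact hC0
  -- reflection
  have hrefl := setIntegral_reflect hΩ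
    (fun q : Pt × ℝ => Φ₁ q.1 q.2 * (starRingEnd ℂ) (dX1 Φ₂ q.1 q.2))
    (hHper hc₂ hΦ₁q hΦ₂q)
  have hpt : ∀ p : Pt × ℝ,
      Φ₁ (p.1.1, -p.1.2) (-p.2) * (starRingEnd ℂ) (dX1 Φ₂ (p.1.1, -p.1.2) (-p.2))
        = Φ₂ p.1 p.2 * (starRingEnd ℂ) (dX1 Φ₁ p.1 p.2) := by
    intro p
    have h1 : Φ₁ (p.1.1, -p.1.2) (-p.2) = (s : ℂ) * Φ₂ p.1 p.2 := by
      rw [hsym p.1 p.2, ← mul_assoc, hss, one_mul]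
    have h2 : dX1 Φ₂ (p.1.1, -p.1.2) (-p.2) = (s : ℂ) * dX1 Φ₁ p.1 p.2 :=
      dX1_reflect hc₁ hc₂ hsym p.1 p.2
    rw [h1, h2, map_mul, Complex.conj_ofReal]
    calc ((s : ℂ) * Φ₂ p.1 p.2) * ((s : ℂ) * (starRingEnd ℂ) (dX1 Φ₁ p.1 p.2))
        = ((s : ℂ) * (s : ℂ)) * (Φ₂ p.1 p.2 * (starRingEnd ℂ) (dX1 Φ₁ p.1 p.2)) := by ring
      _ = Φ₂ p.1 p.2 * (starRingEnd ℂ) (dX1 Φ₁ p.1 p.2) := by rw [hss, one_mul]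
  have hBA' : B = A' := by
    rw [hB, hA', ← hrefl]
    exact integral_congr_ae (Filter.Eventually.of_forall fun p => (hpt p).symm)
  -- conj A = A'
  have hconjA : (starRingEnd ℂ) A = A' := by
    rw [hA, hA', ← integral_conj]
    refine integral_congr_ae (Filter.Eventually.of_forall fun p => ?_)
    simp only [map_mul, Complex.conj_conj]
  -- global rewriting of the goal
  have hglob : (∫ p in D, (starRingEnd ℂ) (Φ₁ p.1 p.2) * (-Complex.I * dX1 Φ₂ p.1 p.2))
      = -Complex.I * A := by
    rw [hA, show (fun p : Pt × ℝ =>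
        (starRingEnd ℂ) (Φ₁ p.1 p.2) * (-Complex.I * dX1 Φ₂ p.1 p.2))
      = fun p : Pt × ℝ =>
        -Complex.I * ((starRingEnd ℂ) (Φ₁ p.1 p.2) * dX1 Φ₂ p.1 p.2) from
      funext fun p => by ring]
    exact integral_const_mul _ _
  rw [hglob, map_mul]
  have hBmA : B = -A := by linear_combination hAB
  rw [hconjA, ← hBA', hBmA]
  simp only [map_neg, Complex.conj_I]
  ring
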